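/- arXiv:2010.07890 — 4 statements merged into one kernel-verified Lean document; each statement's English description precedes it below -/
import Mathlib

section
/- Let h be the constant arithmetic function h(n) = 1 for n ≥ 1 (with h(0) := 0). Let n, m ≥ 1 be integers and let μ be a partition of m. Then 𝓗(μ, n) = multinomial(ℓ(μ); 𝔪_1, …, 𝔪_m) · C(n − |μ|, ℓ(μ)), where 𝔪_j is the multiplicity of j as a part of μ, multinomial(ℓ(μ); 𝔪_1, …, 𝔪_m) = ℓ(μ)!/(𝔪_1! ⋯ 𝔪_m!), and C(a,b) is the binomial coefficient. -/
open Finset Polynomial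

/-- The recursively defined polynomials `P_n^{g,h}` attached to arithmetic functions
`g, h : ℕ → ℝ` (values at `0` are irrelevant): `P_0 = 1` and
`P_n(x) = (x / h(n)) · Σ_{k=1}^n g(k) · P_{n-k}(x)`. -/
noncomputable def Ppoly (g h : ℕ → ℝ) : ℕ → Polynomial ℝ
  | 0 => 1
  | (n+1) => Polynomial.C (h (n+1))⁻¹ * Polynomial.X *
      ∑ k ∈ Finset.range (n+1), Polynomial.C (g (k+1)) * Ppoly g h (n - k)
  termination_by n => n
  decreasing_by simp_wf <;> omega

/-- `A_{n,m}^{g,h}`: the coefficient of `x^m` in `(∏_{k=1}^n h(k)) · P_n^{g,h}(x)`. -/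
noncomputable def Acoeff (g h : ℕ → ℝ) (n m : ℕ) : ℝ :=
  (∏ k ∈ Finset.Icc 1 n, h k) * (Ppoly g h n).coeff m

/-- `h` extended by the convention `h(0) := 0`. -/
noncomputable def hExt (h : ℕ → ℝ) (n : ℕ) : ℝ := if n = 0 then 0 else h n

/-- `h_m(n) = ∏_{k=0}^{m-1} h(n-k)` (with the convention `h(0) := 0`). -/
noncomputable def hIter (h : ℕ → ℝ) (m n : ℕ) : ℝ :=
  ∏ k ∈ Finset.range m, hExt h (n - k)

/-- Helper for `H(μ,n)`: defined on reversed compositions, peeling off the head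
(which is the last part `μ_{r+1}` of the original composition). -/
noncomputable def Hrev (h : ℕ → ℝ) : List ℕ → ℕ → ℝ
  | [], _ => 1
  | (a :: t), n =>
      if n < (a :: t).sum + (a :: t).length then 0
      else ∑ k ∈ Finset.Ico ((a :: t).sum + (a :: t).length - 1) n,
        hIter h a k * Hrev h t (k - a)

/-- `H(μ, n)` for a composition `μ` (a list of positive integers): `H(ε,n) = 1`,
`H(μ,n) = Σ_{k=|μ|+ℓ(μ)-1}^{n-1} h_{μ_{r+1}}(k) · H((μ_1,…,μ_r), k - μ_{r+1})`
if `n ≥ |μ| + ℓ(μ)`, and `0` otherwise. -/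
noncomputable def HFun (h : ℕ → ℝ) (μ : List ℕ) (n : ℕ) : ℝ := Hrev h μ.reverse n

/-- `𝓗(μ, n) = Σ_{λ ∈ Orb(μ)} H(λ, n)`: sum over all distinct rearrangements of `μ`. -/
noncomputable def HCal (h : ℕ → ℝ) (μ : List ℕ) (n : ℕ) : ℝ :=
  ∑ lam ∈ μ.permutations.toFinset, HFun h lam n

/-- `𝓖(μ) = ∏_{k=1}^{ℓ(μ)} g(μ_k + 1)`. -/
noncomputable def GCal (g : ℕ → ℝ) (μ : List ℕ) : ℝ := (μ.map (fun p => g (p + 1))).prod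

lemma hIter_one (a k : ℕ) (h : a ≤ k) : hIter (fun _ => 1) a k = 1 := by
  unfold hIter
  apply Finset.prod_eq_one
  intro i hi
  simp only [Finset.mem_range] at hi
  have : k - i ≠ 0 := by omega
  simp [hExt, this]

lemma sum_Ico_choose (b t : ℕ) : ∀ n, ∑ k ∈ Finset.Ico (b + t) n, ((k - b).choose t) =
    (n - b).choose (t + 1) := by
  intro n
  induction n with
  | zero => simp
  | succ n ih =>
    rcases le_or_gt (b + t) n with hle | hlt
    · rw [Finset.sum_Ico_succ_top hle, ih]
      have h1 : n + 1 - b = (n - b) + 1 := by omega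
      rw [h1, Nat.choose_succ_succ, Nat.add_comm]
    · have h1 : Finset.Ico (b + t) (n + 1) = ∅ := by
        apply Finset.Ico_eq_empty; omega
      rw [h1]
      have h2 : n + 1 - b < t + 1 := by omega
      simp [Nat.choose_eq_zero_of_lt h2]

lemma Hrev_one (l : List ℕ) : ∀ n, Hrev (fun _ => 1) l n =
    ((n - l.sum).choose l.length : ℝ) := by
  induction l with
  | nil => intro n; simp [Hrev]
  | cons a t ih =>
    intro n
    rw [Hrev]
    rw [List.sum_cons, List.length_cons]
    rcases lt_or_ge n (a + t.sum + (t.length + 1)) with hlt | hle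
    · rw [if_pos hlt]
      have : n - (a + t.sum) < t.length + 1 := by omega
      rw [Nat.choose_eq_zero_of_lt this]
      simp
    · rw [if_neg (by omega)]
      have hidx : a + t.sum + (t.length + 1) - 1 = (a + t.sum) + t.length := by omega
      rw [hidx]
      have hterm : ∀ k ∈ Finset.Ico ((a + t.sum) + t.length) n,
          hIter (fun _ => 1) a k * Hrev (fun _ => 1) t (k - a) =
          (((k - (a + t.sum)).choose t.length : ℕ) : ℝ) := by
        intro k hk
        simp only [Finset.mem_Ico] at hk
        rw [hIter_one a k (by omega), one_mul, ih]
        congr 2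
        omega
      rw [Finset.sum_congr rfl hterm, ← Nat.cast_sum, sum_Ico_choose]

lemma perm_toFinset_eq (l : List ℕ) (hl : l ≠ []) :
    l.permutations.toFinset =
      l.toFinset.biUnion (fun a => ((l.erase a).permutations.toFinset).image (a :: ·)) := by
  ext x
  simp only [List.mem_toFinset, List.mem_permutations, Finset.mem_biUnion, Finset.mem_image]
  constructor
  · intro hx
    have hxne : x ≠ [] := by
      intro h; subst h; exact hl (hx.symm.eq_nil)
    obtain ⟨a, t, rfl⟩ := List.exists_cons_of_ne_nil hxne
    rw [List.cons_perm_iff_perm_erase] at hx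
    exact ⟨a, hx.1, t, hx.2, rfl⟩
  · rintro ⟨a, ha, t, ht, rfl⟩
    rw [List.cons_perm_iff_perm_erase]
    exact ⟨ha, ht⟩

lemma perm_count (T : Finset ℕ) : ∀ N (l : List ℕ), l.length = N → (∀ a ∈ l, a ∈ T) →
    (∏ a ∈ T, (l.count a).factorial) * l.permutations.toFinset.card =
      l.length.factorial := by
  intro N
  induction N with
  | zero =>
    intro l hlen _
    have : l = [] := List.length_eq_zero_iff.mp hlen
    subst this
    simp [List.permutations]
  | succ N ih =>
    intro l hlen hT
    have hl : l ≠ [] := by intro h; subst h; simp at hlen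
    rw [perm_toFinset_eq l hl]
    rw [Finset.card_biUnion (by
      intro a _ b _ hab
      rw [Function.onFun, Finset.disjoint_left]
      rintro x hx hx'
      simp only [Finset.mem_image] at hx hx'
      obtain ⟨t, _, rfl⟩ := hx
      obtain ⟨t', _, h⟩ := hx'
      exact hab (List.cons.injEq .. ▸ h).1.symm)]
    have himg : ∀ a, (((l.erase a).permutations.toFinset).image (a :: ·)).card =
        (l.erase a).permutations.toFinset.card := by
      intro a
      exact Finset.card_image_of_injective _ (fun x y h => (List.cons.injEq .. ▸ h).2)
    simp only [himg]
    rw [Finset.mul_sum]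
    have hterm : ∀ a ∈ l.toFinset,
        (∏ b ∈ T, (l.count b).factorial) * (l.erase a).permutations.toFinset.card =
          l.count a * N.factorial := by
      intro a ha
      rw [List.mem_toFinset] at ha
      have haT : a ∈ T := hT a ha
      have hca : 1 ≤ l.count a := List.count_pos_iff.mpr ha
      have hprod : (∏ b ∈ T, (l.count b).factorial) =
          l.count a * ∏ b ∈ T, ((l.erase a).count b).factorial := by
        rw [← Finset.mul_prod_erase T _ haT, ← Finset.mul_prod_erase T
          (fun b => ((l.erase a).count b).factorial) haT, ← mul_assoc]
        congr 1
        · obtain ⟨c, hc⟩ : ∃ c, l.count a = c + 1 := ⟨l.count a - 1, by omega⟩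
          rw [List.count_erase_self, hc, Nat.factorial_succ]
          simp
        · apply Finset.prod_congr rfl
          intro b hb
          rw [List.count_erase_of_ne (Finset.ne_of_mem_erase hb)]
      rw [hprod, mul_assoc]
      congr 1
      have hlen' : (l.erase a).length = N := by
        rw [List.length_erase_of_mem ha, hlen]; rfl
      rw [← hlen']
      exact ih (l.erase a) hlen' (fun b hb => hT b (List.mem_of_mem_erase hb))
    rw [Finset.sum_congr rfl hterm, ← Finset.sum_mul]
    have hsum : (∑ a ∈ l.toFinset, l.count a) = l.length := by
      have := Multiset.toFinset_sum_count_eq (l : Multiset ℕ)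
      simpa using this
    rw [hsum, hlen, Nat.factorial_succ]

/-- For `h = 1` and a partition `μ` of `m`:
`𝓗(μ, n) = (ℓ(μ)! / (𝔪_1! ⋯ 𝔪_m!)) · C(n - |μ|, ℓ(μ))`. -/
theorem HCal_h_one (n m : ℕ) (hn : 1 ≤ n) (hm : 1 ≤ m) (μ : Nat.Partition m) :
    HCal (fun _ => 1) μ.parts.toList n =
      ((Nat.factorial (Multiset.card μ.parts) : ℝ) /
          ∏ j ∈ Finset.Icc 1 m, (Nat.factorial (μ.parts.count j) : ℝ)) *
        (Nat.choose (n - μ.parts.sum) (Multiset.card μ.parts) : ℝ) := by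
  classical
  set L := μ.parts.toList with hL
  have hmem : ∀ a ∈ L, a ∈ Finset.Icc 1 m := by
    intro a ha
    rw [hL, ← Multiset.mem_coe, Multiset.coe_toList] at ha
    refine Finset.mem_Icc.mpr ⟨μ.parts_pos ha, ?_⟩
    exact (Multiset.le_sum_of_mem ha).trans_eq μ.parts_sum
  have hcount : ∀ j, L.count j = μ.parts.count j := by
    intro j
    conv_rhs => rw [← Multiset.coe_toList μ.parts]
    rw [Multiset.coe_count]
  have hsum : L.sum = μ.parts.sum := Multiset.sum_toList _
  have hlen : L.length = Multiset.card μ.parts := Multiset.length_toList _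
  unfold HCal
  have hterm : ∀ lam ∈ L.permutations.toFinset, HFun (fun _ => 1) lam n =
      (((n - μ.parts.sum).choose (Multiset.card μ.parts) : ℕ) : ℝ) := by
    intro lam hlam
    rw [List.mem_toFinset, List.mem_permutations] at hlam
    unfold HFun
    rw [Hrev_one, List.sum_reverse, List.length_reverse, hlam.sum_eq, hlam.length_eq,
      hsum, hlen]
  rw [Finset.sum_congr rfl hterm, Finset.sum_const, nsmul_eq_mul]
  congr 1
  have hkey := perm_count (Finset.Icc 1 m) L.length L rfl hmem
  simp only [hcount, hlen] at hkey
  have hne : (∏ j ∈ Finset.Icc 1 m, ((μ.parts.count j).factorial : ℝ)) ≠ 0 := by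
    apply Finset.prod_ne_zero_iff.mpr
    intro j _
    exact_mod_cast (Nat.factorial_pos _).ne'
  rw [eq_div_iff hne]
  rw [mul_comm]
  exact_mod_cast congrArg (Nat.cast : ℕ → ℝ) hkey
end

section
/- Let id denote the arithmetic function id(n) = n. Then for all integers 1 ≤ m ≤ n, A_{n,m}^{id,id}/n! = C(n−1, m−1)/m! (the Lah numbers), where C(a,b) is the binomial coefficient. -/
open Finset Polynomial

noncomputable def cLah (n m : ℕ) : ℝ :=
  if n = 0 then (if m = 0 then 1 else 0)
  else if m = 0 then 0
  else (Nat.choose (n-1) (m-1) : ℝ) / (Nat.factorial m : ℝ)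

lemma hockey (n l : ℕ) : ∑ j ∈ Finset.range n, Nat.choose j l = Nat.choose n (l+1) := by
  induction n with
  | zero => simp
  | succ n ih => rw [Finset.sum_range_succ, ih, Nat.choose_succ_succ n l, Nat.add_comm]

lemma sum_key (n l : ℕ) : ∑ j ∈ Finset.range n, (n - j) * Nat.choose j l = Nat.choose (n+1) (l+2) := by
  induction n with
  | zero => simp [Nat.choose_eq_zero_of_lt (by omega : 1 < l + 2)]
  | succ n ih =>
    have h1 : ∀ j ∈ Finset.range (n+1), (n + 1 - j) * Nat.choose j l
        = (n - j) * Nat.choose j l + Nat.choose j l := by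
      intro j hj
      rw [Finset.mem_range] at hj
      have : n + 1 - j = (n - j) + 1 := by omega
      rw [this, add_mul, one_mul]
    rw [Finset.sum_congr rfl h1, Finset.sum_add_distrib, Finset.sum_range_succ,
      Nat.sub_self, zero_mul, add_zero, ih, hockey, Nat.choose_succ_succ (n+1) (l+1),
      Nat.add_comm]

lemma sum_key' (n l : ℕ) :
    ∑ k ∈ Finset.range n, (k + 1) * Nat.choose (n - 1 - k) l = Nat.choose (n+1) (l+2) := by
  rw [← sum_key n l, ← Finset.sum_range_reflect (fun j => (j + 1) * Nat.choose (n - 1 - j) l) n]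
  apply Finset.sum_congr rfl
  intro j hj
  rw [Finset.mem_range] at hj
  have h1 : n - 1 - j + 1 = n - j := by omega
  have h2 : n - 1 - (n - 1 - j) = j := by omega
  rw [h1, h2]

lemma Ppoly_coeff : ∀ n m : ℕ,
    (Ppoly (fun k => (k:ℝ)) (fun k => (k:ℝ)) n).coeff m = cLah n m := by
  intro n
  induction n using Nat.strong_induction_on with
  | _ n ih =>
    match n with
    | 0 => intro m; rw [Ppoly.eq_1]; simp [cLah, Polynomial.coeff_one]
    | (n+1) =>
      intro m
      rw [Ppoly.eq_2, mul_assoc, Polynomial.coeff_C_mul]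
      have hS : ∀ l : ℕ,
          (∑ k ∈ Finset.range (n+1), Polynomial.C ((k+1 : ℕ) : ℝ) *
            Ppoly (fun k => (k:ℝ)) (fun k => (k:ℝ)) (n - k)).coeff l
          = ∑ k ∈ Finset.range (n+1), ((k+1 : ℕ) : ℝ) * cLah (n - k) l := by
        intro l
        rw [Polynomial.finset_sum_coeff]
        apply Finset.sum_congr rfl
        intro k hk
        rw [Polynomial.coeff_C_mul, ih (n - k) (by omega)]
      match m with
      | 0 =>
        rw [Polynomial.mul_coeff_zero, Polynomial.coeff_X_zero, zero_mul, mul_zero]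
        simp [cLah]
      | 1 =>
        rw [Polynomial.coeff_X_mul, hS 0]
        have : ∀ k ∈ Finset.range (n+1), ((k+1:ℕ):ℝ) * cLah (n-k) 0
            = if k = n then ((n+1:ℕ):ℝ) else 0 := by
          intro k hk
          rw [Finset.mem_range] at hk
          by_cases h : k = n
          · subst h; simp [cLah]
          · have : n - k ≠ 0 := by omega
            simp [cLah, this, h]
        rw [Finset.sum_congr rfl this, Finset.sum_ite_eq' (Finset.range (n+1)) n]
        simp [cLah]
        rw [inv_mul_cancel₀ (by positivity : ((n:ℝ)+1) ≠ 0)]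
      | (l+2) =>
        rw [Polynomial.coeff_X_mul, hS (l+1), Finset.sum_range_succ]
        have hz : ((n+1:ℕ):ℝ) * cLah (n-n) (l+1) = 0 := by simp [cLah]
        rw [hz, add_zero]
        have hterm : ∀ k ∈ Finset.range n, ((k+1:ℕ):ℝ) * cLah (n-k) (l+1)
            = ((((k+1) * Nat.choose (n-1-k) l : ℕ)):ℝ) / (Nat.factorial (l+1) : ℝ) := by
          intro k hk
          rw [Finset.mem_range] at hk
          have h0 : ¬(n - k = 0) := by omega
          have h1 : ¬(l + 1 = 0) := by omega
          rw [cLah, if_neg h0, if_neg h1]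
          have h2 : n - k - 1 = n - 1 - k := by omega
          rw [h2]
          push_cast
          ring
        rw [Finset.sum_congr rfl hterm, ← Finset.sum_div, ← Nat.cast_sum, sum_key' n l]
        have key : (n+1) * Nat.choose n (l+1) = Nat.choose (n+1) (l+2) * (l+2) :=
          Nat.add_one_mul_choose_eq n (l+1)
        have keyR : ((n:ℝ)+1) * (Nat.choose n (l+1) : ℝ)
            = (Nat.choose (n+1) (l+2) : ℝ) * ((l:ℝ)+2) := by exact_mod_cast key
        have h0 : ¬(n + 1 = 0) := by omega
        have h1 : ¬(l + 2 = 0) := by omega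
        rw [cLah, if_neg h0, if_neg h1]
        have hfac : (Nat.factorial (l+2) : ℝ) = ((l:ℝ)+2) * (Nat.factorial (l+1) : ℝ) := by
          rw [Nat.factorial_succ (l+1)]; push_cast; ring
        simp only [Nat.add_sub_cancel]
        rw [hfac]
        have hne1 : ((n:ℝ)+1) ≠ 0 := by positivity
        have hne2 : (Nat.factorial (l+1) : ℝ) ≠ 0 := by positivity
        have hne3 : ((l:ℝ)+2) ≠ 0 := by positivity
        field_simp
        rw [show l + 2 - 1 = l + 1 by omega]; push_cast
        linear_combination (-1 : ℝ) * keyR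

/-- Lah numbers: `A_{n,m}^{id,id}/n! = C(n-1,m-1)/m!`. -/
theorem lah_numbers (n m : ℕ) (hm1 : 1 ≤ m) (hmn : m ≤ n) :
    Acoeff (fun k => (k : ℝ)) (fun k => (k : ℝ)) n m / (Nat.factorial n : ℝ) =
      (Nat.choose (n - 1) (m - 1) : ℝ) / (Nat.factorial m : ℝ) := by
  have hprodN : (∏ k ∈ Finset.Icc 1 n, k) = Nat.factorial n := by
    rw [← Finset.Ico_add_one_right_eq_Icc, Finset.prod_Ico_id_eq_factorial]
  have hprod : (∏ k ∈ Finset.Icc 1 n, ((k : ℝ))) = (Nat.factorial n : ℝ) := by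
    rw [← Nat.cast_prod, hprodN]
  have hn0 : ¬(n = 0) := by omega
  have hm0 : ¬(m = 0) := by omega
  rw [Acoeff, Ppoly_coeff, hprod, cLah, if_neg hn0, if_neg hm0,
    mul_div_assoc]
  have h1 : (Nat.factorial n : ℝ) ≠ 0 := by positivity
  have h2 : (Nat.factorial m : ℝ) ≠ 0 := by positivity
  field_simp
end

section
/- Let g be a normalized arithmetic function of moderate growth (i.e., |g(n)| ≤ C^n for some constant C > 0). Then for all integers 1 ≤ m ≤ n, A_{n,m}^{g,id}/n! = (1/m!) · Σ_{(k_1, …, k_m)} ∏_{i=1}^{m} g(k_i)/k_i, where the sum runs over all m-tuples of positive integers (k_1, …, k_m) with k_1 + … + k_m = n. -/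
open Finset Polynomial

lemma prod_Icc_cast_factorial (n : ℕ) : ∏ k ∈ Finset.Icc 1 n, (k:ℝ) = n.factorial := by
  induction n with
  | zero => simp
  | succ n ih => rw [Finset.prod_Icc_succ_top (by omega), ih, Nat.factorial_succ]; push_cast; ring

noncomputable def Ssum (g : ℕ → ℝ) (m n : ℕ) : ℝ :=
  ∑ t ∈ (Finset.Nat.antidiagonalTuple m n).filter (fun t => ∀ i, 0 < t i),
    ∏ i, g (t i) / (t i : ℝ)

lemma swap_sum (g : ℕ → ℝ) (M N : ℕ) (j : Fin (M+1)) :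
    ∑ t ∈ (Finset.Nat.antidiagonalTuple (M+1) (N+1)).filter (fun t => ∀ i, 0 < t i),
      (t j : ℝ) * ∏ i, g (t i) / (t i : ℝ)
    = ∑ t ∈ (Finset.Nat.antidiagonalTuple (M+1) (N+1)).filter (fun t => ∀ i, 0 < t i),
      (t 0 : ℝ) * ∏ i, g (t i) / (t i : ℝ) := by
  refine Finset.sum_bij' (fun t _ => t ∘ (Equiv.swap 0 j)) (fun t _ => t ∘ (Equiv.swap 0 j))
    ?_ ?_ ?_ ?_ ?_
  · intro t ht
    simp only [Finset.mem_filter, Finset.Nat.mem_antidiagonalTuple] at ht ⊢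
    exact ⟨by simp only [Function.comp_apply]; rw [Equiv.sum_comp (Equiv.swap 0 j) t]; exact ht.1,
      fun i => ht.2 _⟩
  · intro t ht
    simp only [Finset.mem_filter, Finset.Nat.mem_antidiagonalTuple] at ht ⊢
    exact ⟨by simp only [Function.comp_apply]; rw [Equiv.sum_comp (Equiv.swap 0 j) t]; exact ht.1,
      fun i => ht.2 _⟩
  · intro t ht; funext i; simp [Function.comp, Equiv.swap_apply_self]
  · intro t ht; funext i; simp [Function.comp, Equiv.swap_apply_self]
  · intro t ht
    simp only [Function.comp]
    rw [Equiv.prod_comp (Equiv.swap 0 j) (fun i => g (t i) / (t i : ℝ)),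
      Equiv.swap_apply_left]

lemma peel (M N : ℕ) (F : ℕ → (Fin M → ℕ) → ℝ) :
    ∑ t ∈ (Finset.Nat.antidiagonalTuple (M+1) (N+1)).filter (fun t => ∀ i, 0 < t i),
      F (t 0) (Fin.tail t)
    = ∑ k ∈ Finset.range (N+1),
        ∑ s ∈ (Finset.Nat.antidiagonalTuple M (N-k)).filter (fun s => ∀ i, 0 < s i),
          F (k+1) s := by
  rw [Finset.sum_sigma']
  refine Finset.sum_bij' (fun t _ => (⟨t 0 - 1, Fin.tail t⟩ : Σ _ : ℕ, Fin M → ℕ))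
    (fun p _ => Fin.cons (p.1+1) p.2) ?_ ?_ ?_ ?_ ?_
  · intro t ht
    simp only [Finset.mem_filter, Finset.Nat.mem_antidiagonalTuple] at ht
    obtain ⟨hsum, hpos⟩ := ht
    rw [Fin.sum_univ_succ] at hsum
    have h0 : 0 < t 0 := hpos 0
    simp only [Finset.mem_sigma, Finset.mem_range, Finset.mem_filter,
      Finset.Nat.mem_antidiagonalTuple]
    refine ⟨by omega, by simp only [Fin.tail]; omega, fun i => hpos i.succ⟩
  · rintro ⟨k, s⟩ hp
    simp only [Finset.mem_sigma, Finset.mem_range, Finset.mem_filter,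
      Finset.Nat.mem_antidiagonalTuple] at hp
    obtain ⟨hk, hsum, hpos⟩ := hp
    simp only [Finset.mem_filter, Finset.Nat.mem_antidiagonalTuple]
    constructor
    · rw [Fin.sum_univ_succ]
      simp only [Fin.cons_zero, Fin.cons_succ]
      omega
    · intro i
      refine Fin.cases ?_ ?_ i
      · simp
      · intro i'; simpa using hpos i'
  · intro t ht
    simp only [Finset.mem_filter] at ht
    have h0 : 0 < t 0 := ht.2 0
    have h1 : t 0 - 1 + 1 = t 0 := by omega
    show Fin.cons (t 0 - 1 + 1) (Fin.tail t) = t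
    rw [h1]
    exact Fin.cons_self_tail t
  · rintro ⟨k, s⟩ hp
    simp [Fin.tail_cons]
  · intro t ht
    simp only [Finset.mem_filter] at ht
    have h0 : 0 < t 0 := ht.2 0
    have h1 : t 0 - 1 + 1 = t 0 := by omega
    show F (t 0) (Fin.tail t) = F (t 0 - 1 + 1) (Fin.tail t)
    rw [h1]

lemma key2 (g : ℕ → ℝ) (M N : ℕ) :
    ((N:ℝ)+1) * Ssum g (M+1) (N+1)
      = ((M:ℝ)+1) * ∑ k ∈ Finset.range (N+1), g (k+1) * Ssum g M (N-k) := by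
  have h1 : ((N:ℝ)+1) * Ssum g (M+1) (N+1)
      = ∑ t ∈ (Finset.Nat.antidiagonalTuple (M+1) (N+1)).filter (fun t => ∀ i, 0 < t i),
          ∑ j : Fin (M+1), (t j : ℝ) * ∏ i, g (t i) / (t i : ℝ) := by
    rw [Ssum, Finset.mul_sum]
    refine Finset.sum_congr rfl fun t ht => ?_
    rw [← Finset.sum_mul]
    congr 1
    simp only [Finset.mem_filter, Finset.Nat.mem_antidiagonalTuple] at ht
    rw [← Nat.cast_sum, ht.1]
    push_cast; ring
  rw [h1, Finset.sum_comm]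
  rw [Finset.sum_congr rfl (fun j _ => swap_sum g M N j)]
  rw [Finset.sum_const, Finset.card_univ, Fintype.card_fin, nsmul_eq_mul]
  push_cast
  congr 1
  have h2 : ∑ t ∈ (Finset.Nat.antidiagonalTuple (M+1) (N+1)).filter (fun t => ∀ i, 0 < t i),
      (t 0 : ℝ) * ∏ i, g (t i) / (t i : ℝ)
      = ∑ t ∈ (Finset.Nat.antidiagonalTuple (M+1) (N+1)).filter (fun t => ∀ i, 0 < t i),
          g (t 0) * ∏ i : Fin M, g (Fin.tail t i) / (Fin.tail t i : ℝ) := by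
    refine Finset.sum_congr rfl fun t ht => ?_
    simp only [Finset.mem_filter] at ht
    have h0 : ((t 0 : ℕ) : ℝ) ≠ 0 := by
      have := ht.2 0; positivity
    rw [Fin.prod_univ_succ, ← mul_assoc, mul_comm ((t 0 : ℕ):ℝ) (g (t 0) / _),
      div_mul_cancel₀ _ h0]
    rfl
  rw [h2, peel M N (fun a s => g a * ∏ i, g (s i) / (s i : ℝ))]
  refine Finset.sum_congr rfl fun k _ => ?_
  rw [Ssum, Finset.mul_sum]

lemma key (g : ℕ → ℝ) : ∀ n m, (Ppoly g (fun k => (k:ℝ)) n).coeff m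
    = ((m.factorial : ℝ))⁻¹ * Ssum g m n := by
  intro n
  induction n using Nat.strong_induction_on with
  | _ n ih =>
    match n with
    | 0 =>
      intro m
      match m with
      | 0 =>
        simp [Ppoly, Ssum, Finset.Nat.antidiagonalTuple_zero_zero, Finset.filter_singleton]
      | (M+1) =>
        simp [Ppoly, Ssum, Finset.Nat.antidiagonalTuple_zero_right, Finset.filter_singleton,
          Polynomial.coeff_one]
    | (N+1) =>
      intro m
      match m with
      | 0 =>
        rw [Ppoly]
        simp [Polynomial.mul_coeff_zero, Ssum, Finset.Nat.antidiagonalTuple_zero_succ]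
      | (M+1) =>
        rw [Ppoly, mul_assoc, Polynomial.coeff_C_mul, Polynomial.coeff_X_mul,
          Polynomial.finset_sum_coeff]
        simp only [Polynomial.coeff_C_mul]
        have hih : ∀ k ∈ Finset.range (N+1), g (k+1) * (Ppoly g (fun k => (k:ℝ)) (N-k)).coeff M
            = g (k+1) * ((M.factorial : ℝ)⁻¹ * Ssum g M (N-k)) := by
          intro k hk
          rw [ih (N-k) (by simp at hk; omega) M]
        rw [Finset.sum_congr rfl hih]
        have h2 := key2 g M N
        have hT : ∑ k ∈ Finset.range (N+1), g (k+1) * ((M.factorial : ℝ)⁻¹ * Ssum g M (N-k))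
            = (M.factorial : ℝ)⁻¹ * ∑ k ∈ Finset.range (N+1), g (k+1) * Ssum g M (N-k) := by
          rw [Finset.mul_sum]
          exact Finset.sum_congr rfl fun k _ => by ring
        rw [hT, Nat.factorial_succ]
        have hN : ((N:ℝ)+1) ≠ 0 := by positivity
        have hM : ((M:ℝ)+1) ≠ 0 := by positivity
        have hMf : ((M.factorial : ℝ)) ≠ 0 := Nat.cast_ne_zero.mpr (Nat.factorial_ne_zero M)
        push_cast
        field_simp
        linear_combination (-1 : ℝ) * h2

/-- `A_{n,m}^{g,id}/n! = (1/m!) Σ_{k_1+⋯+k_m=n, k_i ≥ 1} ∏ g(k_i)/k_i`. -/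
theorem coeff_formula_h_id (g : ℕ → ℝ) (hg : g 1 = 1)
    (hmod : ∃ C : ℝ, 0 < C ∧ ∀ k, 1 ≤ k → |g k| ≤ C ^ k)
    (n m : ℕ) (hm1 : 1 ≤ m) (hmn : m ≤ n) :
    Acoeff g (fun k => (k : ℝ)) n m / (Nat.factorial n : ℝ) =
      (1 / (Nat.factorial m : ℝ)) *
        ∑ k ∈ (Finset.Nat.antidiagonalTuple m n).filter (fun k => ∀ i, 0 < k i),
          ∏ i, g (k i) / (k i : ℝ) := by
  have hf : ((n.factorial : ℝ)) ≠ 0 := Nat.cast_ne_zero.mpr (Nat.factorial_ne_zero n)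
  rw [Acoeff, prod_Icc_cast_factorial, key g n m, mul_div_cancel_left₀ _ hf]
  simp [Ssum, one_div]
end

section
/- Let g be a normalized arithmetic function of moderate growth (i.e., |g(n)| ≤ C^n for some constant C > 0) with g(n) ≥ 0 for all n, and set g̃(n) := g(n)/n. Fix n ≥ 1. If the coefficient sequence (a_{n,0}, …, a_{n,n}) of P_n^{g̃,1}(x) is log-concave (i.e., a_{n,j}^2 ≥ a_{n,j−1} a_{n,j+1} for 1 ≤ j ≤ n−1), then the coefficient sequence of P_n^{g,id}(x) is log-concave; likewise, if the coefficient sequence of P_n^{g̃,1}(x) is ultra-log-concave (i.e., the sequence a_{n,k}/C(n,k) is log-concave), then the coefficient sequence of P_n^{g,id}(x) is ultra-log-concave. -/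
open Finset Polynomial

/-- A finite sequence `a_0, …, a_n` is log-concave if `a_j² ≥ a_{j-1} a_{j+1}`
for `1 ≤ j ≤ n-1`. -/
def SeqLogConcave (a : ℕ → ℝ) (n : ℕ) : Prop :=
  ∀ j, 1 ≤ j → j ≤ n - 1 → a j ^ 2 ≥ a (j - 1) * a (j + 1)

section helpers
lemma Ppoly_zero (g h : ℕ → ℝ) : Ppoly g h 0 = 1 := by rw [Ppoly]

lemma Ppoly_succ (g h : ℕ → ℝ) (n : ℕ) : Ppoly g h (n+1) =
    Polynomial.C (h (n+1))⁻¹ * Polynomial.X *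
      ∑ k ∈ Finset.range (n+1), Polynomial.C (g (k+1)) * Ppoly g h (n - k) := by rw [Ppoly]

lemma sum_swap_tri (M : ℕ) (F : ℕ → ℕ → Polynomial ℝ) :
    ∑ k ∈ range M, ∑ j ∈ range (M - 1 - k), F k j
      = ∑ k ∈ range M, ∑ j ∈ range (M - 1 - k), F j k := by
  have hr : ∀ G : ℕ → ℕ → Polynomial ℝ, ∀ k,
      ∑ j ∈ range (M - 1 - k), G k j = ∑ j ∈ range M, if j + k + 1 < M then G k j else 0 := by
    intro G k
    rw [← Finset.sum_filter]
    apply Finset.sum_congr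
    · ext j; simp only [Finset.mem_filter, Finset.mem_range]; omega
    · intros; rfl
  simp only [hr F]
  rw [Finset.sum_comm]
  apply Finset.sum_congr rfl
  intro k _
  rw [hr (fun a b => F b a) k]
  apply Finset.sum_congr rfl
  intro j _
  have h : j + k + 1 < M ↔ k + j + 1 < M := by omega
  simp only [h]

lemma Ppoly_mul_nat (g : ℕ → ℝ) (n : ℕ) :
    C ((n:ℕ):ℝ) * Ppoly g (fun k => (k:ℝ)) n
      = X * ∑ j ∈ range n, C (g (j+1)) * Ppoly g (fun k => (k:ℝ)) (n - 1 - j) := by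
  cases n with
  | zero => simp
  | succ m =>
    rw [Ppoly_succ]
    have h0 : ((m+1:ℕ):ℝ) ≠ 0 := Nat.cast_ne_zero.2 (Nat.succ_ne_zero m)
    rw [← mul_assoc, ← mul_assoc, ← C_mul, mul_inv_cancel₀ h0, C_1, one_mul]; rfl

lemma derivative_Ppoly (g : ℕ → ℝ) : ∀ n, derivative (Ppoly g (fun k => (k:ℝ)) n)
    = ∑ k ∈ range n, C (g (k+1) / ((k+1:ℕ):ℝ)) * Ppoly g (fun k => (k:ℝ)) (n - 1 - k) := by
  intro n
  induction n using Nat.strong_induction_on with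
  | _ n IH =>
  match n with
  | 0 => simp [Ppoly_zero]
  | (m+1) =>
    have h0 : ((m+1:ℕ):ℝ) ≠ 0 := Nat.cast_ne_zero.2 (Nat.succ_ne_zero m)
    set P : ℕ → Polynomial ℝ := Ppoly g (fun k => (k:ℝ)) with hPdef
    show derivative (P (m+1)) = ∑ k ∈ range (m+1), C (g (k+1) / ((k+1:ℕ):ℝ)) * P (m - k)
    set T : Polynomial ℝ := ∑ k ∈ range (m+1), C (g (k+1)) * P (m - k) with hT
    have hrec : P (m+1) = C ((m+1:ℕ):ℝ)⁻¹ * X * T := by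
      rw [hPdef, Ppoly_succ]
    have hT' : derivative T = ∑ k ∈ range (m+1), C (g (k+1)) *
        ∑ j ∈ range (m-k), C (g (j+1) / ((j+1:ℕ):ℝ)) * P (m - k - 1 - j) := by
      rw [hT, derivative_sum]
      apply Finset.sum_congr rfl
      intro k hk
      rw [derivative_mul, derivative_C, zero_mul, zero_add, IH (m-k) (by omega)]
    have hsub : ∀ a b : ℕ, m - a - 1 - b = m - b - 1 - a := fun a b => by omega
    have step1 : ∀ k ∈ range (m+1),
        C ((m+1:ℕ):ℝ) * (C (g (k+1) / ((k+1:ℕ):ℝ)) * P (m - k))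
          = C (g (k+1) / ((k+1:ℕ):ℝ)) *
              (X * ∑ j ∈ range (m-k), C (g (j+1)) * P (m - k - 1 - j))
            + C (g (k+1)) * P (m - k) := by
      intro k hk
      have hk' : k ≤ m := by simpa [Nat.lt_succ_iff] using hk
      have hcast : ((m+1:ℕ):ℝ) = ((m-k:ℕ):ℝ) + ((k+1:ℕ):ℝ) := by
        rw [← Nat.cast_add]; congr 1; omega
      have hmn := Ppoly_mul_nat g (m-k)
      rw [← hPdef] at hmn
      have hCg : C ((k+1:ℕ):ℝ) * C (g (k+1) / ((k+1:ℕ):ℝ)) = C (g (k+1)) := by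
        rw [← C_mul]; congr 1; field_simp
      rw [hcast, C_add, add_mul, ← hmn, ← mul_assoc (C ((k+1:ℕ):ℝ)), hCg]
      ring
    have key : C ((m+1:ℕ):ℝ) * (∑ k ∈ range (m+1),
        C (g (k+1) / ((k+1:ℕ):ℝ)) * P (m - k)) = T + X * derivative T := by
      rw [Finset.mul_sum, Finset.sum_congr rfl step1, Finset.sum_add_distrib, ← hT, hT', add_comm]
      congr 1
      rw [Finset.mul_sum]
      calc ∑ k ∈ range (m+1), C (g (k+1) / ((k+1:ℕ):ℝ)) *
              (X * ∑ j ∈ range (m-k), C (g (j+1)) * P (m - k - 1 - j))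
          = ∑ k ∈ range (m+1), ∑ j ∈ range (m - k),
              X * (C (g (k+1) / ((k+1:ℕ):ℝ)) * (C (g (j+1)) * P (m - k - 1 - j))) := by
            apply Finset.sum_congr rfl; intro k _
            rw [Finset.mul_sum, Finset.mul_sum]
            apply Finset.sum_congr rfl; intro j _; ring
        _ = ∑ k ∈ range (m+1), ∑ j ∈ range (m - k),
              X * (C (g (j+1) / ((j+1:ℕ):ℝ)) * (C (g (k+1)) * P (m - j - 1 - k))) := by
            exact sum_swap_tri (m+1) (fun k j =>
              X * (C (g (k+1) / ((k+1:ℕ):ℝ)) * (C (g (j+1)) * P (m - k - 1 - j))))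
        _ = ∑ k ∈ range (m+1), X * (C (g (k+1)) *
              ∑ j ∈ range (m-k), C (g (j+1) / ((j+1:ℕ):ℝ)) * P (m - k - 1 - j)) := by
            apply Finset.sum_congr rfl; intro k _
            rw [Finset.mul_sum, Finset.mul_sum]
            apply Finset.sum_congr rfl; intro j _
            rw [hsub j k]; ring
    rw [hrec, mul_assoc, derivative_C_mul, derivative_mul, derivative_X, one_mul, ← key,
      ← mul_assoc, ← C_mul, inv_mul_cancel₀ h0, C_1, one_mul]

lemma coeff_rel (g : ℕ → ℝ) : ∀ n m : ℕ,
    (Ppoly (fun k => g k / (k : ℝ)) (fun _ => 1) n).coeff m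
      = (m.factorial : ℝ) * (Ppoly g (fun k => (k:ℝ)) n).coeff m := by
  intro n
  induction n using Nat.strong_induction_on with
  | _ n IH =>
  match n with
  | 0 => intro m; rw [Ppoly_zero, Ppoly_zero]; rcases m with _ | m <;> simp [Polynomial.coeff_one]
  | (s+1) =>
    intro m
    have hQ : Ppoly (fun k => g k / (k : ℝ)) (fun _ => 1) (s+1)
        = X * ∑ k ∈ range (s+1), C (g (k+1) / ((k+1:ℕ):ℝ)) *
            Ppoly (fun k => g k / (k : ℝ)) (fun _ => 1) (s - k) := by
      rw [Ppoly_succ]; norm_num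
    rcases m with _ | j
    · rw [hQ, Ppoly_succ, mul_coeff_zero, mul_coeff_zero, mul_coeff_zero, coeff_X_zero]
      simp
    · rw [hQ, coeff_X_mul, finset_sum_coeff]
      have : ∀ k ∈ range (s+1),
          (C (g (k+1) / ((k+1:ℕ):ℝ)) * Ppoly (fun k => g k / (k : ℝ)) (fun _ => 1) (s - k)).coeff j
            = (j.factorial : ℝ) *
              (C (g (k+1) / ((k+1:ℕ):ℝ)) * Ppoly g (fun k => (k:ℝ)) (s - k)).coeff j := by
        intro k hk
        rw [coeff_C_mul, coeff_C_mul, IH (s-k) (by omega)]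
        ring
      rw [Finset.sum_congr rfl this, ← Finset.mul_sum, ← finset_sum_coeff]
      have hd := derivative_Ppoly g (s+1)
      have : (∑ k ∈ range (s+1), C (g (k+1) / ((k+1:ℕ):ℝ)) *
          Ppoly g (fun k => (k:ℝ)) (s - k)) = derivative (Ppoly g (fun k => (k:ℝ)) (s+1)) :=
        hd.symm
      rw [this, coeff_derivative]
      rw [Nat.factorial_succ]
      push_cast
      ring

lemma coeff_nonneg (g' : ℕ → ℝ) (h : ∀ k, 0 ≤ g' (k+1)) :
    ∀ n m : ℕ, 0 ≤ (Ppoly g' (fun _ => 1) n).coeff m := by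
  intro n
  induction n using Nat.strong_induction_on with
  | _ n IH =>
  match n with
  | 0 => intro m; rw [Ppoly_zero]; rcases m with _ | m <;> simp [Polynomial.coeff_one]
  | (s+1) =>
    intro m
    have hQ : Ppoly g' (fun _ => 1) (s+1)
        = X * ∑ k ∈ range (s+1), C (g' (k+1)) * Ppoly g' (fun _ => 1) (s - k) := by
      rw [Ppoly_succ]; norm_num
    rcases m with _ | j
    · rw [hQ, mul_coeff_zero, coeff_X_zero, zero_mul]
    · rw [hQ, coeff_X_mul, finset_sum_coeff]
      apply Finset.sum_nonneg
      intro k hk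
      rw [coeff_C_mul]
      exact mul_nonneg (h k) (IH (s-k) (by omega) j)

lemma lc_div_factorial (b : ℕ → ℝ) (hb : ∀ j, 0 ≤ b j) (n : ℕ)
    (h : SeqLogConcave b n) : SeqLogConcave (fun j => b j / (j.factorial : ℝ)) n := by
  intro j hj1 hj2
  have hs := h j hj1 hj2
  simp only
  obtain ⟨i, rfl⟩ : ∃ i, j = i + 1 := ⟨j - 1, by omega⟩
  have hpred : i + 1 - 1 = i := rfl
  rw [hpred]
  have f1 : (0:ℝ) < (i.factorial : ℝ) := by exact_mod_cast i.factorial_pos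
  have f2 : (0:ℝ) < ((i+1).factorial : ℝ) := by exact_mod_cast (i+1).factorial_pos
  have f3 : (0:ℝ) < ((i+2).factorial : ℝ) := by exact_mod_cast (i+2).factorial_pos
  have e2 : ((i+1).factorial : ℝ) = ((i:ℝ)+1) * (i.factorial : ℝ) := by
    rw [Nat.factorial_succ]; push_cast; ring
  have e3 : ((i+2).factorial : ℝ) = ((i:ℝ)+2) * ((i+1).factorial : ℝ) := by
    rw [Nat.factorial_succ (i+1)]; push_cast; ring
  rw [ge_iff_le, div_mul_div_comm, div_pow, div_le_div_iff₀ (by positivity) (by positivity)]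
  have hb2 : 0 ≤ b i * b (i+2) := mul_nonneg (hb i) (hb (i+2))
  have hs' : b i * b (i+2) ≤ b (i+1) ^ 2 := hs
  have hineq : ((i+1).factorial:ℝ) ^ 2 ≤ (i.factorial:ℝ) * ((i+2).factorial:ℝ) := by
    rw [e2, e3, e2]; nlinarith [f1, sq_nonneg (i.factorial:ℝ)]
  calc b i * b (i+2) * ((i+1).factorial:ℝ)^2
      ≤ b (i+1) ^ 2 * ((i+1).factorial:ℝ)^2 := by nlinarith [hs', sq_nonneg ((i+1).factorial:ℝ)]
    _ ≤ b (i+1) ^ 2 * ((i.factorial:ℝ) * ((i+2).factorial:ℝ)) := by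
        nlinarith [sq_nonneg (b (i+1))]

end helpers

/-- Ultra-log-concave: the sequence `a_k / C(n,k)` is log-concave. -/
def SeqUltraLogConcave (a : ℕ → ℝ) (n : ℕ) : Prop :=
  SeqLogConcave (fun k => a k / (Nat.choose n k : ℝ)) n

/-- Log-concavity (resp. ultra-log-concavity) of the coefficients of `P_n^{g̃,1}`
transfers to the coefficients of `P_n^{g,id}`, where `g̃(k) = g(k)/k`. -/
theorem log_concavity_transfer (g : ℕ → ℝ) (hg : g 1 = 1)
    (hmod : ∃ C : ℝ, 0 < C ∧ ∀ k, 1 ≤ k → |g k| ≤ C ^ k)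
    (hpos : ∀ k, 1 ≤ k → 0 ≤ g k) (n : ℕ) (hn : 1 ≤ n) :
    (SeqLogConcave (fun j => (Ppoly (fun k => g k / (k : ℝ)) (fun _ => 1) n).coeff j) n →
        SeqLogConcave (fun j => (Ppoly g (fun k => (k : ℝ)) n).coeff j) n) ∧
      (SeqUltraLogConcave (fun j => (Ppoly (fun k => g k / (k : ℝ)) (fun _ => 1) n).coeff j) n →
        SeqUltraLogConcave (fun j => (Ppoly g (fun k => (k : ℝ)) n).coeff j) n) := by

  have hrel : ∀ j : ℕ, (Ppoly g (fun k => (k:ℝ)) n).coeff j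
      = (Ppoly (fun k => g k / (k : ℝ)) (fun _ => 1) n).coeff j / (j.factorial : ℝ) := by
    intro j
    rw [coeff_rel g n j]
    have : (j.factorial : ℝ) ≠ 0 := by exact_mod_cast j.factorial_ne_zero
    field_simp
  have hQnn : ∀ j : ℕ, 0 ≤ (Ppoly (fun k => g k / (k : ℝ)) (fun _ => 1) n).coeff j := by
    intro j
    refine coeff_nonneg _ (fun k => ?_) n j
    exact div_nonneg (hpos (k+1) (by omega)) (by positivity)
  constructor
  · intro h
    have heq : (fun j => (Ppoly g (fun k => (k:ℝ)) n).coeff j)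
        = fun j => (Ppoly (fun k => g k / (k : ℝ)) (fun _ => 1) n).coeff j / (j.factorial : ℝ) :=
      funext hrel
    rw [heq]
    exact lc_div_factorial _ hQnn n h
  · intro h
    have h' : SeqLogConcave (fun k =>
        (Ppoly (fun k => g k / (k : ℝ)) (fun _ => 1) n).coeff k / (n.choose k : ℝ)) n := h
    show SeqLogConcave (fun k => (Ppoly g (fun k => (k:ℝ)) n).coeff k / (n.choose k : ℝ)) n
    have heq : (fun k => (Ppoly g (fun k => (k:ℝ)) n).coeff k / (n.choose k : ℝ))
        = fun k => ((Ppoly (fun k => g k / (k : ℝ)) (fun _ => 1) n).coeff k / (n.choose k : ℝ))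
            / (k.factorial : ℝ) := by
      funext k
      rw [hrel k, div_right_comm]
    rw [heq]
    refine lc_div_factorial _ (fun k => div_nonneg (hQnn k) (by positivity)) n h'
end
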